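/- Let p_I, p_x, p_y, p_z ≥ 0 with p_I + p_x + p_y + p_z = 1, and let P_p be the qubit Pauli channel mapping a 2×2 complex matrix ρ to p_I·ρ + p_x·XρX + p_y·YρY + p_z·ZρZ, where X = !![0,1;1,0], Y = !![0,−i;i,0], Z = !![1,0;0,−1]. Set p_max := max{ |p_I+p_x−p_y−p_z|, |p_I−p_x+p_y−p_z|, |p_I−p_x−p_y+p_z| } and assume p_max < 1. Then for every α ∈ (0,1), the supremum of D_α(P_p(ρ)‖P_p(σ)) over all pairs (ρ,σ) of density matrices on ℂ² equals (1/(α−1))·log Q(1−p_max, α), where Q(q,α) := (1−q/2)^α·(q/2)^{1−α} + (1−q/2)^{1−α}·(q/2)^α. -/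

import Mathlib

open Matrix ComplexOrder

/-- Functional calculus for a matrix: apply `f` to the eigenvalues of a Hermitian matrix
(junk value `0` on non-Hermitian input). -/
noncomputable def matFun {n : Type*} [Fintype n] [DecidableEq n] (f : ℝ → ℝ)
    (A : Matrix n n ℂ) : Matrix n n ℂ :=
  if hA : A.IsHermitian then
    (hA.eigenvectorUnitary : Matrix n n ℂ) *
      Matrix.diagonal (fun i => (f (hA.eigenvalues i) : ℂ)) *
      (hA.eigenvectorUnitary : Matrix n n ℂ)ᴴ
  else 0

/-- Real matrix power `A^t` via functional calculus (with `0^t = 0`). -/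
noncomputable def mrpow {n : Type*} [Fintype n] [DecidableEq n]
    (A : Matrix n n ℂ) (t : ℝ) : Matrix n n ℂ :=
  matFun (fun x => x ^ t) A

/-- Matrix logarithm via functional calculus. -/
noncomputable def mlog {n : Type*} [Fintype n] [DecidableEq n]
    (A : Matrix n n ℂ) : Matrix n n ℂ :=
  matFun Real.log A

/-- The quantum Rényi relative entropy `D_α(ρ‖σ) = (1/(α−1))·log Tr(ρ^α σ^{1−α})`. -/
noncomputable def renyiD {n : Type*} [Fintype n] [DecidableEq n]
    (α : ℝ) (ρ σ : Matrix n n ℂ) : ℝ :=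
  (1 / (α - 1)) * Real.log ((mrpow ρ α * mrpow σ (1 - α)).trace.re)

/-- The quantum relative entropy `D(ρ‖σ) = Tr[ρ(log ρ − log σ)]`. -/
noncomputable def qRelEnt {n : Type*} [Fintype n] [DecidableEq n]
    (ρ σ : Matrix n n ℂ) : ℝ :=
  ((ρ * (mlog ρ - mlog σ)).trace).re

/-- A density matrix: positive semidefinite with unit trace. -/
def IsDensity {n : Type*} [Fintype n] (ρ : Matrix n n ℂ) : Prop :=
  ρ.PosSemidef ∧ ρ.trace = 1

/-- for the qubit Pauli channel with probabilities `(p_I,p_x,p_y,p_z)` and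
`p_max < 1`, for every `α ∈ (0,1)`,
`sup_{ρ,σ} D_α(P_p(ρ)‖P_p(σ)) = (1/(α−1))·log Q(1−p_max, α)`. -/
lemma matFun_eq_lin {f : ℝ → ℝ} {A : Matrix (Fin 2) (Fin 2) ℂ} (hA : A.IsHermitian)
    (c₁ c₂ : ℝ) (h : ∀ i, f (hA.eigenvalues i) = c₁ * hA.eigenvalues i + c₂) :
    matFun f A = (c₁ : ℂ) • A + (c₂ : ℂ) • 1 := by
  rw [matFun, dif_pos hA]
  have hdiag : Matrix.diagonal (fun i => (f (hA.eigenvalues i) : ℂ)) =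
      (c₁ : ℂ) • Matrix.diagonal (RCLike.ofReal ∘ hA.eigenvalues) + (c₂ : ℂ) • 1 := by
    ext i j
    by_cases hij : i = j
    · subst hij
      simp only [Matrix.diagonal_apply_eq, Matrix.add_apply, Matrix.smul_apply,
        Function.comp_apply, Matrix.one_apply_eq, smul_eq_mul, mul_one]
      rw [h i]
      push_cast
      norm_num [RCLike.ofReal_alg]
    · simp [Matrix.diagonal_apply_ne _ hij, Matrix.one_apply_ne hij]
  have hU : (hA.eigenvectorUnitary : Matrix (Fin 2) (Fin 2) ℂ) *
      (hA.eigenvectorUnitary : Matrix (Fin 2) (Fin 2) ℂ)ᴴ = 1 := by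
    have := (Matrix.mem_unitaryGroup_iff).mp hA.eigenvectorUnitary.2
    simpa [Matrix.star_eq_conjTranspose] using this
  have hspec := hA.spectral_theorem
  rw [hdiag, Matrix.mul_add, Matrix.add_mul, Matrix.mul_smul, Matrix.mul_smul, Matrix.smul_mul,
    Matrix.smul_mul, Matrix.mul_one, hU]
  congr 1
  conv_rhs => rw [hspec, Unitary.conjStarAlgAut_apply]
  rw [Matrix.star_eq_conjTranspose]

lemma trace_eq_sum_eig {A : Matrix (Fin 2) (Fin 2) ℂ} (hA : A.IsHermitian) :
    A.trace = ∑ i, (hA.eigenvalues i : ℂ) := by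
  conv_lhs => rw [hA.spectral_theorem, Unitary.conjStarAlgAut_apply]
  rw [Matrix.trace_mul_cycle]
  have hU : star (hA.eigenvectorUnitary : Matrix (Fin 2) (Fin 2) ℂ) *
      (hA.eigenvectorUnitary : Matrix (Fin 2) (Fin 2) ℂ) = 1 :=
    (Matrix.mem_unitaryGroup_iff').mp hA.eigenvectorUnitary.2
  rw [hU, Matrix.one_mul, Matrix.trace_diagonal]
  rfl

lemma eig_mem {A : Matrix (Fin 2) (Fin 2) ℂ} (hA : A.IsHermitian) (a b : ℝ)
    (htr : A.trace = ((a + b : ℝ) : ℂ)) (hdet : A.det = ((a * b : ℝ) : ℂ)) :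
    ∀ i, hA.eigenvalues i = a ∨ hA.eigenvalues i = b := by
  have hsum : hA.eigenvalues 0 + hA.eigenvalues 1 = a + b := by
    have h1 := trace_eq_sum_eig hA
    rw [htr, Fin.sum_univ_two] at h1
    have h2 : ((a + b : ℝ) : ℂ) = ((hA.eigenvalues 0 + hA.eigenvalues 1 : ℝ) : ℂ) := by
      rw [h1]; push_cast; rfl
    exact (Complex.ofReal_inj.mp h2).symm
  have hprod : hA.eigenvalues 0 * hA.eigenvalues 1 = a * b := by
    have h1 := hA.det_eq_prod_eigenvalues
    rw [hdet, Fin.prod_univ_two] at h1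
    have h2 : ((a * b : ℝ) : ℂ) = ((hA.eigenvalues 0 * hA.eigenvalues 1 : ℝ) : ℂ) := by
      rw [h1]; push_cast; rfl
    exact (Complex.ofReal_inj.mp h2).symm
  have k0 : hA.eigenvalues 0 = a ∨ hA.eigenvalues 0 = b := by
    have h : (hA.eigenvalues 0 - a) * (hA.eigenvalues 0 - b) = 0 := by
      linear_combination hA.eigenvalues 0 * hsum - hprod
    rcases mul_eq_zero.mp h with h | h
    · exact Or.inl (by linarith)
    · exact Or.inr (by linarith)
  have k1 : hA.eigenvalues 1 = a ∨ hA.eigenvalues 1 = b := by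
    have h : (hA.eigenvalues 1 - a) * (hA.eigenvalues 1 - b) = 0 := by
      linear_combination hA.eigenvalues 1 * hsum - hprod
    rcases mul_eq_zero.mp h with h | h
    · exact Or.inl (by linarith)
    · exact Or.inr (by linarith)
  intro i
  fin_cases i
  · exact k0
  · exact k1
noncomputable def cc (m t : ℝ) : ℝ :=
  if m = 0 then 0 else (((1+m)/2) ^ t - ((1-m)/2) ^ t) / m

noncomputable def dd (m t : ℝ) : ℝ := ((1+m)/2) ^ t - cc m t * ((1+m)/2)

lemma cc_spec_hi (m t : ℝ) : ((1+m)/2 : ℝ) ^ t = cc m t * ((1+m)/2) + dd m t := by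
  rw [dd]; ring

lemma cc_spec_lo (m t : ℝ) : ((1-m)/2 : ℝ) ^ t = cc m t * ((1-m)/2) + dd m t := by
  rw [dd, cc]
  by_cases hm : m = 0
  · rw [if_pos hm, hm]; ring
  · rw [if_neg hm]; field_simp; ring

lemma cc_mul (m t : ℝ) : cc m t * m = ((1+m)/2 : ℝ) ^ t - ((1-m)/2) ^ t := by
  rw [cc]
  by_cases hm : m = 0
  · rw [if_pos hm, hm]; ring
  · rw [if_neg hm]; field_simp

lemma cc_nonneg {m t : ℝ} (hm0 : 0 ≤ m) (hm1 : m ≤ 1) (ht : 0 ≤ t) : 0 ≤ cc m t := by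
  rw [cc]
  by_cases hm : m = 0
  · rw [if_pos hm]
  · rw [if_neg hm]
    apply div_nonneg _ hm0
    have := Real.rpow_le_rpow (by linarith : (0:ℝ) ≤ (1-m)/2) (by linarith : (1-m)/2 ≤ (1+m)/2) ht
    linarith

lemma Spos {m t : ℝ} (hm0 : 0 ≤ m) (hm1 : m ≤ 1) :
    0 < ((1+m)/2 : ℝ) ^ t + ((1-m)/2) ^ t := by
  have : (0:ℝ) < ((1+m)/2) ^ t := Real.rpow_pos_of_pos (by linarith) _
  have h2 : (0:ℝ) ≤ ((1-m)/2) ^ t := Real.rpow_nonneg (by linarith) _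
  linarith

lemma herm_form (t : ℝ) (w : ℂ) :
    (!![((t:ℝ):ℂ), w; (starRingEnd ℂ) w, ((1-t:ℝ):ℂ)]).IsHermitian := by
  rw [Matrix.IsHermitian]
  ext i j
  fin_cases i <;> fin_cases j <;>
    simp [Matrix.conjTranspose_apply, Complex.conj_ofReal]

lemma mrpow_eq {A : Matrix (Fin 2) (Fin 2) ℂ} (hA : A.IsHermitian) {a b t c₁ c₂ : ℝ}
    (htr : A.trace = ((a+b:ℝ):ℂ)) (hdet : A.det = ((a*b:ℝ):ℂ))
    (h1 : a ^ t = c₁ * a + c₂) (h2 : b ^ t = c₁ * b + c₂) :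
    mrpow A t = (c₁:ℂ) • A + (c₂:ℂ) • 1 := by
  apply matFun_eq_lin hA
  intro i
  rcases eig_mem hA a b htr hdet i with h | h <;> rw [h] <;> assumption

lemma mrpow_form {t m : ℝ} {W : ℂ} (hm2 : m^2 = (2*t-1)^2 + 4*Complex.normSq W)
    (s : ℝ) :
    mrpow !![((t:ℝ):ℂ), W; (starRingEnd ℂ) W, ((1-t:ℝ):ℂ)] s =
      ((cc m s : ℝ):ℂ) • !![((t:ℝ):ℂ), W; (starRingEnd ℂ) W, ((1-t:ℝ):ℂ)]
        + ((dd m s : ℝ):ℂ) • 1 := by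
  apply mrpow_eq (herm_form t W) (a := (1+m)/2) (b := (1-m)/2)
  · rw [Matrix.trace_fin_two]
    norm_num
    push_cast
    ring
  · rw [Matrix.det_fin_two]
    norm_num
    rw [Complex.mul_conj]
    have h : ((t*(1-t) - Complex.normSq W : ℝ) : ℂ) = (((1+m)/2*((1-m)/2) : ℝ) : ℂ) := by
      norm_cast
      nlinarith [hm2]
    push_cast at h ⊢
    linear_combination h
  · exact cc_spec_hi m s
  · exact cc_spec_lo m s

lemma trace_formula {t₁ t₂ m₁ m₂ : ℝ} {w₁ w₂ : ℂ}
    (hm₁ : m₁^2 = (2*t₁-1)^2 + 4*Complex.normSq w₁)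
    (hm₂ : m₂^2 = (2*t₂-1)^2 + 4*Complex.normSq w₂) (α : ℝ) :
    (mrpow !![((t₁:ℝ):ℂ), w₁; (starRingEnd ℂ) w₁, ((1-t₁:ℝ):ℂ)] α *
     mrpow !![((t₂:ℝ):ℂ), w₂; (starRingEnd ℂ) w₂, ((1-t₂:ℝ):ℂ)] (1-α)).trace.re
    = cc m₁ α * cc m₂ (1-α) * (t₁*t₂ + (1-t₁)*(1-t₂) + 2*(w₁ * (starRingEnd ℂ) w₂).re)
      + cc m₁ α * dd m₂ (1-α) + dd m₁ α * cc m₂ (1-α) + 2 * dd m₁ α * dd m₂ (1-α) := by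
  rw [mrpow_form hm₁ α, mrpow_form hm₂ (1-α)]
  rw [Matrix.trace_fin_two]
  simp only [Matrix.add_apply, Matrix.mul_apply, Fin.sum_univ_two, Matrix.smul_apply,
    Matrix.one_apply, Matrix.cons_val', Matrix.cons_val_zero, Matrix.cons_val_one,
    Matrix.head_cons, Matrix.head_fin_const, Matrix.empty_val', Matrix.cons_val_fin_one,
    smul_eq_mul]
  simp only [Complex.add_re, Complex.mul_re, Complex.mul_im, Complex.add_im,
    Complex.ofReal_re, Complex.ofReal_im, Complex.one_re, Complex.one_im,
    Complex.zero_re, Complex.zero_im, Complex.conj_re, Complex.conj_im]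
  norm_num
  ring

/-- combine: rewrite the trace formula value in the `½(S·S' + c·c'·k)` form. -/
lemma combine (m₁ m₂ α t₁ t₂ R : ℝ) :
    cc m₁ α * cc m₂ (1-α) * (t₁*t₂ + (1-t₁)*(1-t₂) + 2*R)
      + cc m₁ α * dd m₂ (1-α) + dd m₁ α * cc m₂ (1-α) + 2 * dd m₁ α * dd m₂ (1-α)
    = (1/2) * ((((1+m₁)/2)^α + ((1-m₁)/2)^α) * ((((1+m₂)/2)^(1-α) + ((1-m₂)/2)^(1-α)))
        + cc m₁ α * cc m₂ (1-α) * ((2*t₁-1)*(2*t₂-1) + 4*R)) := by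
  have h1 := cc_spec_hi m₁ α
  have h2 := cc_spec_lo m₁ α
  have h3 := cc_spec_hi m₂ (1-α)
  have h4 := cc_spec_lo m₂ (1-α)
  rw [h1, h2, h3, h4]
  ring

noncomputable def dmat (t a b : ℝ) : Matrix (Fin 2) (Fin 2) ℂ :=
  !![((t:ℝ):ℂ), (a:ℂ)+(b:ℂ)*Complex.I; (a:ℂ)-(b:ℂ)*Complex.I, ((1-t:ℝ):ℂ)]

lemma conj_aux (a b : ℝ) : (starRingEnd ℂ) ((a:ℂ)+(b:ℂ)*Complex.I) = (a:ℂ)-(b:ℂ)*Complex.I := by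
  simp [Complex.ext_iff]

lemma dmat_conj (t a b : ℝ) :
    dmat t a b = !![((t:ℝ):ℂ), (a:ℂ)+(b:ℂ)*Complex.I;
      (starRingEnd ℂ) ((a:ℂ)+(b:ℂ)*Complex.I), ((1-t:ℝ):ℂ)] := by
  rw [dmat, conj_aux]

lemma dmat_det (t a b : ℝ) :
    (dmat t a b).det = ((t*(1-t) - (a^2+b^2) : ℝ) : ℂ) := by
  rw [dmat, Matrix.det_fin_two]
  norm_num
  rw [Complex.ext_iff]
  constructor <;>
    simp [Complex.add_re, Complex.mul_re, Complex.add_im, Complex.mul_im,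
      ← Complex.ofReal_pow] <;> ring

lemma density_repr {ρ : Matrix (Fin 2) (Fin 2) ℂ} (h : IsDensity ρ) :
    ∃ t a b : ℝ, ρ = dmat t a b ∧ a^2 + b^2 ≤ t*(1-t) := by
  have hherm : ρ.IsHermitian := h.1.isHermitian
  have h0 := congrFun (congrFun hherm 0) 0
  rw [Matrix.conjTranspose_apply, Complex.star_def] at h0
  have him : (ρ 0 0).im = 0 := Complex.conj_eq_iff_im.mp h0
  have h00 : ρ 0 0 = ((ρ 0 0).re : ℂ) := by
    rw [Complex.ext_iff]; simp [him]
  have h10 : ρ 1 0 = (starRingEnd ℂ) (ρ 0 1) := by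
    have h1 := congrFun (congrFun hherm 1) 0
    rw [Matrix.conjTranspose_apply, Complex.star_def] at h1
    exact h1.symm
  have h11 : ρ 1 1 = ((1 - (ρ 0 0).re : ℝ) : ℂ) := by
    have htr := h.2
    rw [Matrix.trace_fin_two] at htr
    push_cast
    rw [← h00]
    linear_combination htr
  have heta : ρ = !![ρ 0 0, ρ 0 1; ρ 1 0, ρ 1 1] := by
    ext i j
    fin_cases i <;> fin_cases j <;> rfl
  have hform : ρ = dmat (ρ 0 0).re (ρ 0 1).re (ρ 0 1).im := by
    conv_lhs => rw [heta]
    rw [dmat_conj, Complex.re_add_im, h00, h10, h11]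
    simp
  refine ⟨(ρ 0 0).re, (ρ 0 1).re, (ρ 0 1).im, hform, ?_⟩
  have hdet2 := dmat_det (ρ 0 0).re (ρ 0 1).re (ρ 0 1).im
  rw [← hform] at hdet2
  have hprod := hherm.det_eq_prod_eigenvalues
  rw [Fin.prod_univ_two] at hprod
  have he0 := h.1.eigenvalues_nonneg 0
  have he1 := h.1.eigenvalues_nonneg 1
  have hkey : ((ρ 0 0).re*(1-(ρ 0 0).re) - ((ρ 0 1).re^2+(ρ 0 1).im^2) : ℝ)
      = hherm.eigenvalues 0 * hherm.eigenvalues 1 := by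
    have h2 := hdet2.symm.trans hprod
    have h3 : (((ρ 0 0).re*(1-(ρ 0 0).re) - ((ρ 0 1).re^2+(ρ 0 1).im^2) : ℝ) : ℂ)
        = ((hherm.eigenvalues 0 * hherm.eigenvalues 1 : ℝ) : ℂ) := by
      rw [h2]; push_cast; rfl
    exact Complex.ofReal_inj.mp h3
  nlinarith [mul_nonneg he0 he1]

lemma dmat_density {t a b : ℝ} (h1 : a^2 + b^2 ≤ t*(1-t)) : IsDensity (dmat t a b) := by
  constructor
  · rw [Matrix.posSemidef_iff_dotProduct_mulVec]
    constructor
    · rw [dmat_conj]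
      exact herm_form t _
    · intro x
      have key : dotProduct (star x) ((dmat t a b) *ᵥ x) =
          ((t*((x 0).re^2+(x 0).im^2) + (1-t)*((x 1).re^2+(x 1).im^2)
            + 2*(a*((x 0).re*(x 1).re + (x 0).im*(x 1).im)
                 + b*((x 0).im*(x 1).re - (x 0).re*(x 1).im)) : ℝ) : ℂ) := by
        simp only [dmat, dotProduct, Matrix.mulVec, Fin.sum_univ_two,
          Pi.star_apply, RCLike.star_def]
        norm_num [Matrix.cons_val_zero, Matrix.cons_val_one, Matrix.head_cons]
        rw [Complex.ext_iff]
        constructor <;>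
          simp [Complex.add_re, Complex.mul_re, Complex.add_im, Complex.mul_im,
            ← Complex.ofReal_pow] <;> ring
      rw [key]
      rw [Complex.zero_le_real]
      set p := (x 0).re; set q := (x 0).im; set r := (x 1).re; set s := (x 1).im
      nlinarith [sq_nonneg (t*p + a*r - b*s), sq_nonneg (t*q + a*s + b*r),
        sq_nonneg ((1-t)*r + a*p + b*q), sq_nonneg ((1-t)*s + a*q - b*p),
        mul_nonneg (sub_nonneg.mpr h1) (by positivity : (0:ℝ) ≤ p^2+q^2+r^2+s^2)]
  · rw [dmat, Matrix.trace_fin_two]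
    norm_num


lemma output_dmat {pI px py pz : ℝ}
    {X Y Z : Matrix (Fin 2) (Fin 2) ℂ}
    (hX : X = !![0, 1; 1, 0])
    (hY : Y = !![0, -Complex.I; Complex.I, 0])
    (hZ : Z = !![1, 0; 0, -1])
    {Pp : Matrix (Fin 2) (Fin 2) ℂ → Matrix (Fin 2) (Fin 2) ℂ}
    (hPp : ∀ ρ, Pp ρ = ((pI : ℝ) : ℂ) • ρ + ((px : ℝ) : ℂ) • (X * ρ * X) +
      ((py : ℝ) : ℂ) • (Y * ρ * Y) + ((pz : ℝ) : ℂ) • (Z * ρ * Z))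
    (hsum : pI + px + py + pz = 1)
    (t a b : ℝ) :
    Pp (dmat t a b) = dmat ((pI+pz)*t + (px+py)*(1-t))
      ((pI+px-py-pz)*a) ((pI-px+py-pz)*b) := by
  rw [hPp, hX, hY, hZ, dmat, dmat]
  ext i j
  fin_cases i <;> fin_cases j <;>
    · simp only [Matrix.add_apply, Matrix.smul_apply, Matrix.mul_apply, Fin.sum_univ_two,
        Matrix.cons_val', Matrix.cons_val_zero, Matrix.cons_val_one, Matrix.head_cons,
        Matrix.empty_val', Matrix.cons_val_fin_one, smul_eq_mul]
      rw [Complex.ext_iff]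
      constructor <;>
        simp [Complex.add_re, Complex.mul_re, Complex.add_im, Complex.mul_im] <;> ring_nf <;>
        nlinarith [hsum]

lemma trace_formula_dmat {t₁ a₁ b₁ t₂ a₂ b₂ m₁ m₂ : ℝ}
    (hm₁ : m₁^2 = (2*t₁-1)^2 + 4*(a₁^2+b₁^2))
    (hm₂ : m₂^2 = (2*t₂-1)^2 + 4*(a₂^2+b₂^2)) (α : ℝ) :
    (mrpow (dmat t₁ a₁ b₁) α * mrpow (dmat t₂ a₂ b₂) (1-α)).trace.re
    = (1/2) * ((((1+m₁)/2)^α + ((1-m₁)/2)^α) * (((1+m₂)/2)^(1-α) + ((1-m₂)/2)^(1-α))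
        + cc m₁ α * cc m₂ (1-α) * ((2*t₁-1)*(2*t₂-1) + 4*(a₁*a₂+b₁*b₂))) := by
  have hns₁ : Complex.normSq ((a₁:ℂ)+(b₁:ℂ)*Complex.I) = a₁^2 + b₁^2 := by
    rw [Complex.normSq_apply]; simp; ring
  have hns₂ : Complex.normSq ((a₂:ℂ)+(b₂:ℂ)*Complex.I) = a₂^2 + b₂^2 := by
    rw [Complex.normSq_apply]; simp; ring
  have hre : (((a₁:ℂ)+(b₁:ℂ)*Complex.I) * (starRingEnd ℂ) ((a₂:ℂ)+(b₂:ℂ)*Complex.I)).re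
      = a₁*a₂ + b₁*b₂ := by
    rw [conj_aux]
    simp [Complex.add_re, Complex.mul_re, Complex.sub_re, Complex.add_im, Complex.mul_im,
      Complex.sub_im]
  rw [dmat_conj t₁ a₁ b₁, dmat_conj t₂ a₂ b₂,
    trace_formula (by rw [hns₁]; exact hm₁) (by rw [hns₂]; exact hm₂) α,
    combine m₁ m₂ α t₁ t₂ _, hre]

lemma F_antitone {β b A : ℝ} (hβ0 : 0 < β) (hβ1 : β < 1)
    (hb : 1/2 ≤ b) (hb1 : b < 1) (hA : A < 1) :
    AntitoneOn (fun x => x ^ β * (1-b) ^ (1-β) + (1-x) ^ β * b ^ (1-β))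
      (Set.Icc (1/2 : ℝ) A) := by
  have hderiv : ∀ x ∈ Set.Icc (1/2 : ℝ) A, HasDerivAt
      (fun x => x ^ β * (1-b) ^ (1-β) + (1-x) ^ β * b ^ (1-β))
      (β * x ^ (β-1) * (1-b) ^ (1-β) + (β * (1-x) ^ (β-1)) * (-1) * b ^ (1-β)) x := by
    intro x hx
    have hx0 : x ≠ 0 := by have := hx.1; intro h; rw [h] at this; linarith
    have hx1 : 1 - x ≠ 0 := by have := hx.2; intro h; nlinarith [hA]
    have h1 : HasDerivAt (fun y : ℝ => 1 - y) (-1) x := by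
      simpa using (hasDerivAt_id x).const_sub 1
    have h2 : HasDerivAt (fun y : ℝ => (1-y) ^ β) ((β * (1-x) ^ (β-1)) * (-1)) x :=
      (Real.hasDerivAt_rpow_const (Or.inl hx1)).comp x h1
    exact ((Real.hasDerivAt_rpow_const (Or.inl hx0)).mul_const _).add (h2.mul_const _)
  apply antitoneOn_of_hasDerivWithinAt_nonpos (convex_Icc _ _)
    (fun x hx => ((hderiv x hx).continuousAt.continuousWithinAt))
    (fun x hx => ((hderiv x (interior_subset hx)).hasDerivWithinAt))
  intro x hx
  rw [interior_Icc] at hx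
  obtain ⟨hx1, hx2⟩ := hx
  have hx0 : (0:ℝ) < x := by linarith
  have hx1' : (0:ℝ) < 1 - x := by linarith
  have hb0 : (0:ℝ) < 1 - b := by linarith
  have key1 : x ^ (β-1) * (1-b) ^ (1-β) ≤ 1 := by
    have h1 : (1-b) ^ (1-β) ≤ x ^ (1-β) :=
      Real.rpow_le_rpow (by linarith) (by linarith) (by linarith)
    calc x ^ (β-1) * (1-b) ^ (1-β) ≤ x ^ (β-1) * x ^ (1-β) := by
          apply mul_le_mul_of_nonneg_left h1 (Real.rpow_nonneg hx0.le _)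
      _ = 1 := by rw [← Real.rpow_add hx0]; norm_num
  have key2 : (1:ℝ) ≤ (1-x) ^ (β-1) * b ^ (1-β) := by
    have h1 : (1-x) ^ (1-β) ≤ b ^ (1-β) :=
      Real.rpow_le_rpow (by linarith) (by linarith) (by linarith)
    calc (1:ℝ) = (1-x) ^ (β-1) * (1-x) ^ (1-β) := by
          rw [← Real.rpow_add hx1']; norm_num
      _ ≤ (1-x) ^ (β-1) * b ^ (1-β) :=
          mul_le_mul_of_nonneg_left h1 (Real.rpow_nonneg hx1'.le _)
  nlinarith [key1, key2, hβ0.le]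

lemma F_ge_Q {α p a b : ℝ} (hα0 : 0 < α) (hα1 : α < 1) (hp : 0 ≤ p) (hp1 : p < 1)
    (ha : a ∈ Set.Icc (1/2 : ℝ) ((1+p)/2)) (hb : b ∈ Set.Icc (1/2 : ℝ) ((1+p)/2)) :
    ((1+p)/2) ^ α * ((1-p)/2) ^ (1-α) + ((1-p)/2) ^ α * ((1+p)/2) ^ (1-α) ≤
      a ^ α * (1-b) ^ (1-α) + (1-a) ^ α * b ^ (1-α) := by
  set A := (1+p)/2 with hAdef
  have hA1 : A < 1 := by rw [hAdef]; linarith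
  have hAmem : A ∈ Set.Icc (1/2 : ℝ) A := ⟨by rw [hAdef]; linarith, le_refl _⟩
  have hb1 : b < 1 := lt_of_le_of_lt hb.2 hA1
  have step1 : A ^ α * (1-b) ^ (1-α) + (1-A) ^ α * b ^ (1-α) ≤
      a ^ α * (1-b) ^ (1-α) + (1-a) ^ α * b ^ (1-α) :=
    F_antitone hα0 hα1 hb.1 hb1 hA1 ha hAmem ha.2
  have hA12 : 1/2 ≤ A := hAmem.1
  have step2 : b ^ (1-α) * (1-A) ^ (1-(1-α)) + (1-b) ^ (1-α) * A ^ (1-(1-α)) ≥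
      A ^ (1-α) * (1-A) ^ (1-(1-α)) + (1-A) ^ (1-α) * A ^ (1-(1-α)) :=
    F_antitone (by linarith) (by linarith) hA12 hA1 hA1 hb hAmem hb.2
  have e1 : 1 - (1-α) = α := by ring
  rw [e1] at step2
  have e2 : 1 - A = (1-p)/2 := by rw [hAdef]; ring
  calc A ^ α * ((1-p)/2) ^ (1-α) + ((1-p)/2) ^ α * A ^ (1-α)
      = A ^ (1-α) * (1-A) ^ α + (1-A) ^ (1-α) * A ^ α := by rw [e2]; ring
    _ ≤ b ^ (1-α) * (1-A) ^ α + (1-b) ^ (1-α) * A ^ α := step2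
    _ = A ^ α * (1-b) ^ (1-α) + (1-A) ^ α * b ^ (1-α) := by ring
    _ ≤ _ := step1

lemma out_bound {pI px py pz p t a b : ℝ}
    (hsum : pI + px + py + pz = 1)
    (hx : |pI+px-py-pz| ≤ p) (hy : |pI-px+py-pz| ≤ p) (hz : |pI-px-py+pz| ≤ p)
    (hin : a^2+b^2 ≤ t*(1-t)) :
    (2*((pI+pz)*t+(px+py)*(1-t))-1)^2
      + 4*(((pI+px-py-pz)*a)^2+((pI-px+py-pz)*b)^2) ≤ p^2 := by
  have hT : 2*((pI+pz)*t+(px+py)*(1-t))-1 = (pI-px-py+pz)*(2*t-1) := by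
    linear_combination hsum
  rw [hT]
  have hx2 : (pI+px-py-pz)^2 ≤ p^2 := by
    rw [← sq_abs]; exact pow_le_pow_left₀ (abs_nonneg _) hx 2
  have hy2 : (pI-px+py-pz)^2 ≤ p^2 := by
    rw [← sq_abs]; exact pow_le_pow_left₀ (abs_nonneg _) hy 2
  have hz2 : (pI-px-py+pz)^2 ≤ p^2 := by
    rw [← sq_abs]; exact pow_le_pow_left₀ (abs_nonneg _) hz 2
  nlinarith [mul_nonneg (sub_nonneg.mpr hz2) (sq_nonneg (2*t-1)),
    mul_nonneg (sub_nonneg.mpr hx2) (sq_nonneg a),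
    mul_nonneg (sub_nonneg.mpr hy2) (sq_nonneg b),
    mul_nonneg (sq_nonneg p) (by nlinarith [hin] : (0:ℝ) ≤ 1 - ((2*t-1)^2 + 4*(a^2+b^2)))]

lemma F_ge_Q' {α p m₁ m₂ : ℝ} (hα0 : 0 < α) (hα1 : α < 1) (hp0 : 0 ≤ p) (hp1 : p < 1)
    (hm₁0 : 0 ≤ m₁) (hm₁p : m₁ ≤ p) (hm₂0 : 0 ≤ m₂) (hm₂p : m₂ ≤ p) :
    ((1+p)/2)^α * ((1-p)/2)^(1-α) + ((1-p)/2)^α * ((1+p)/2)^(1-α)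
      ≤ ((1+m₁)/2)^α * ((1-m₂)/2)^(1-α) + ((1-m₁)/2)^α * ((1+m₂)/2)^(1-α) := by
  have h := F_ge_Q hα0 hα1 hp0 hp1 (a := (1+m₁)/2) (b := (1+m₂)/2)
    ⟨by linarith, by linarith⟩ ⟨by linarith, by linarith⟩
  have e1 : (1:ℝ) - (1+m₂)/2 = (1-m₂)/2 := by ring
  have e2 : (1:ℝ) - (1+m₁)/2 = (1-m₁)/2 := by ring
  rw [e1, e2] at h
  exact h

lemma key_bound {p α T₁ A₁ B₁ T₂ A₂ B₂ : ℝ} (hp0 : 0 ≤ p) (hp1 : p < 1)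
    (hα0 : 0 < α) (hα1 : α < 1)
    (h₁ : (2*T₁-1)^2 + 4*(A₁^2+B₁^2) ≤ p^2)
    (h₂ : (2*T₂-1)^2 + 4*(A₂^2+B₂^2) ≤ p^2) :
    ((1+p)/2)^α * ((1-p)/2)^(1-α) + ((1-p)/2)^α * ((1+p)/2)^(1-α)
      ≤ (mrpow (dmat T₁ A₁ B₁) α * mrpow (dmat T₂ A₂ B₂) (1-α)).trace.re := by
  set m₁ := Real.sqrt ((2*T₁-1)^2 + 4*(A₁^2+B₁^2)) with hm₁def
  set m₂ := Real.sqrt ((2*T₂-1)^2 + 4*(A₂^2+B₂^2)) with hm₂def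
  have hm₁sq : m₁^2 = (2*T₁-1)^2 + 4*(A₁^2+B₁^2) := Real.sq_sqrt (by positivity)
  have hm₂sq : m₂^2 = (2*T₂-1)^2 + 4*(A₂^2+B₂^2) := Real.sq_sqrt (by positivity)
  have hm₁0 : 0 ≤ m₁ := Real.sqrt_nonneg _
  have hm₂0 : 0 ≤ m₂ := Real.sqrt_nonneg _
  have hm₁p : m₁ ≤ p := by
    rw [hm₁def, ← Real.sqrt_sq hp0]
    exact Real.sqrt_le_sqrt h₁
  have hm₂p : m₂ ≤ p := by
    rw [hm₂def, ← Real.sqrt_sq hp0]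
    exact Real.sqrt_le_sqrt h₂
  rw [trace_formula_dmat hm₁sq hm₂sq α]
  have hk : -(m₁*m₂) ≤ (2*T₁-1)*(2*T₂-1) + 4*(A₁*A₂+B₁*B₂) := by
    nlinarith [sq_nonneg ((2*T₁-1)*(2*A₂) - (2*T₂-1)*(2*A₁)),
      sq_nonneg ((2*T₁-1)*(2*B₂) - (2*T₂-1)*(2*B₁)),
      sq_nonneg ((2*A₁)*(2*B₂) - (2*A₂)*(2*B₁)),
      mul_nonneg hm₁0 hm₂0, hm₁sq, hm₂sq,
      sq_nonneg ((2*T₁-1)*(2*T₂-1) + 4*(A₁*A₂+B₁*B₂) + m₁*m₂)]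
  have hcc1 : 0 ≤ cc m₁ α := cc_nonneg hm₁0 (by linarith) hα0.le
  have hcc2 : 0 ≤ cc m₂ (1-α) := cc_nonneg hm₂0 (by linarith) (by linarith)
  have step : (1/2 : ℝ) * ((((1+m₁)/2)^α + ((1-m₁)/2)^α) *
        (((1+m₂)/2)^(1-α) + ((1-m₂)/2)^(1-α))
        - (cc m₁ α * m₁) * (cc m₂ (1-α) * m₂))
      ≤ (1/2) * ((((1+m₁)/2)^α + ((1-m₁)/2)^α) *
        (((1+m₂)/2)^(1-α) + ((1-m₂)/2)^(1-α))
        + cc m₁ α * cc m₂ (1-α) * ((2*T₁-1)*(2*T₂-1) + 4*(A₁*A₂+B₁*B₂))) := by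
    nlinarith [mul_nonneg (mul_nonneg hcc1 hcc2)
      (by linarith : (0:ℝ) ≤ (2*T₁-1)*(2*T₂-1) + 4*(A₁*A₂+B₁*B₂) + m₁*m₂)]
  have e : (1/2 : ℝ) * ((((1+m₁)/2)^α + ((1-m₁)/2)^α) *
        (((1+m₂)/2)^(1-α) + ((1-m₂)/2)^(1-α))
        - (cc m₁ α * m₁) * (cc m₂ (1-α) * m₂))
      = ((1+m₁)/2)^α * ((1-m₂)/2)^(1-α) + ((1-m₁)/2)^α * ((1+m₂)/2)^(1-α) := by
    rw [cc_mul m₁ α, cc_mul m₂ (1-α)]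
    ring
  refine le_trans ?_ step
  rw [e]
  exact F_ge_Q' hα0 hα1 hp0 hp1 hm₁0 hm₁p hm₂0 hm₂p

lemma trace_val {T₁ T₂ A₁ A₂ B₁ B₂ p α : ℝ}
    (hm₁ : p^2 = (2*T₁-1)^2+4*(A₁^2+B₁^2))
    (hm₂ : p^2 = (2*T₂-1)^2+4*(A₂^2+B₂^2))
    (hk : (2*T₁-1)*(2*T₂-1) + 4*(A₁*A₂+B₁*B₂) = -(p*p)) :
    (mrpow (dmat T₁ A₁ B₁) α * mrpow (dmat T₂ A₂ B₂) (1-α)).trace.re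
      = ((1+p)/2)^α * ((1-p)/2)^(1-α) + ((1-p)/2)^α * ((1+p)/2)^(1-α) := by
  rw [trace_formula_dmat hm₁ hm₂ α, hk]
  have h : cc p α * cc p (1-α) * -(p*p)
      = -((((1+p)/2)^α - ((1-p)/2)^α) * ((((1+p)/2)^(1-α) - ((1-p)/2)^(1-α)))) := by
    rw [← cc_mul p α, ← cc_mul p (1-α)]
    ring
  rw [h]
  ring

theorem pauli_renyi_sup
    (pI px py pz : ℝ)
    (hpI : 0 ≤ pI) (hpx : 0 ≤ px) (hpy : 0 ≤ py) (hpz : 0 ≤ pz)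
    (hsum : pI + px + py + pz = 1)
    (X Y Z : Matrix (Fin 2) (Fin 2) ℂ)
    (hX : X = !![0, 1; 1, 0])
    (hY : Y = !![0, -Complex.I; Complex.I, 0])
    (hZ : Z = !![1, 0; 0, -1])
    (Pp : Matrix (Fin 2) (Fin 2) ℂ → Matrix (Fin 2) (Fin 2) ℂ)
    (hPp : ∀ ρ, Pp ρ = ((pI : ℝ) : ℂ) • ρ + ((px : ℝ) : ℂ) • (X * ρ * X) +
      ((py : ℝ) : ℂ) • (Y * ρ * Y) + ((pz : ℝ) : ℂ) • (Z * ρ * Z))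
    (pmax : ℝ)
    (hpmax : pmax = max (max |pI + px - py - pz| |pI - px + py - pz|)
      |pI - px - py + pz|)
    (hpmax1 : pmax < 1)
    (Q : ℝ → ℝ → ℝ)
    (hQ : ∀ q' α, Q q' α = (1 - q' / 2) ^ α * (q' / 2) ^ (1 - α) +
      (1 - q' / 2) ^ (1 - α) * (q' / 2) ^ α)
    (α : ℝ) (hα : α ∈ Set.Ioo (0 : ℝ) 1) :
    sSup {y : ℝ | ∃ ρ σ : Matrix (Fin 2) (Fin 2) ℂ,
        IsDensity ρ ∧ IsDensity σ ∧ y = renyiD α (Pp ρ) (Pp σ)} =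
      (1 / (α - 1)) * Real.log (Q (1 - pmax) α) := by

  obtain ⟨hα0, hα1⟩ := hα
  have hxle : |pI + px - py - pz| ≤ pmax := by
    rw [hpmax]; exact le_max_of_le_left (le_max_left _ _)
  have hyle : |pI - px + py - pz| ≤ pmax := by
    rw [hpmax]; exact le_max_of_le_left (le_max_right _ _)
  have hzle : |pI - px - py + pz| ≤ pmax := by
    rw [hpmax]; exact le_max_right _ _
  have hp0 : 0 ≤ pmax := le_trans (abs_nonneg _) hxle
  have h1p : (0:ℝ) < (1+pmax)/2 := by linarith
  have h2p : (0:ℝ) < (1-pmax)/2 := by linarith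
  have hQeq : Q (1 - pmax) α =
      ((1+pmax)/2)^α * ((1-pmax)/2)^(1-α) + ((1-pmax)/2)^α * ((1+pmax)/2)^(1-α) := by
    rw [hQ]
    have e1 : 1 - (1-pmax)/2 = (1+pmax)/2 := by ring
    rw [e1]
    ring
  have hQpos : 0 < ((1+pmax)/2)^α * ((1-pmax)/2)^(1-α)
      + ((1-pmax)/2)^α * ((1+pmax)/2)^(1-α) := by
    have j1 := mul_pos (Real.rpow_pos_of_pos h1p α) (Real.rpow_pos_of_pos h2p (1-α))
    have j2 := mul_pos (Real.rpow_pos_of_pos h2p α) (Real.rpow_pos_of_pos h1p (1-α))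
    linarith
  rw [hQeq]
  apply IsGreatest.csSup_eq
  constructor
  · -- membership: achievability
    rcases max_choice (max |pI + px - py - pz| |pI - px + py - pz|) |pI - px - py + pz|
      with hm1 | hm2
    · rw [hm1] at hpmax
      rcases max_choice |pI + px - py - pz| |pI - px + py - pz| with hmx | hmy
      · -- pmax = |lx|
        rw [hmx] at hpmax
        refine ⟨dmat (1/2) (1/2) 0, dmat (1/2) (-1/2) 0,
          dmat_density (by norm_num), dmat_density (by norm_num), ?_⟩
        rw [renyiD, output_dmat hX hY hZ hPp hsum, output_dmat hX hY hZ hPp hsum]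
        have hT : 2*((pI+pz)*(1/2:ℝ)+(px+py)*(1-1/2))-1 = 0 := by linarith
        have hm₁ : pmax^2 = (2*((pI+pz)*(1/2:ℝ)+(px+py)*(1-1/2))-1)^2
            + 4*(((pI+px-py-pz)*(1/2))^2+((pI-px+py-pz)*(0:ℝ))^2) := by
          rw [hT, hpmax, sq_abs]; ring
        have hm₂ : pmax^2 = (2*((pI+pz)*(1/2:ℝ)+(px+py)*(1-1/2))-1)^2
            + 4*(((pI+px-py-pz)*(-1/2))^2+((pI-px+py-pz)*(0:ℝ))^2) := by
          rw [hT, hpmax, sq_abs]; ring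
        have hk : (2*((pI+pz)*(1/2:ℝ)+(px+py)*(1-1/2))-1)
              * (2*((pI+pz)*(1/2:ℝ)+(px+py)*(1-1/2))-1)
            + 4*(((pI+px-py-pz)*(1/2))*((pI+px-py-pz)*(-1/2))
              +((pI-px+py-pz)*(0:ℝ))*((pI-px+py-pz)*(0:ℝ))) = -(pmax*pmax) := by
          rw [hT, hpmax, abs_mul_abs_self]; ring
        rw [trace_val hm₁ hm₂ hk]
      · -- pmax = |ly|
        rw [hmy] at hpmax
        refine ⟨dmat (1/2) 0 (1/2), dmat (1/2) 0 (-1/2),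
          dmat_density (by norm_num), dmat_density (by norm_num), ?_⟩
        rw [renyiD, output_dmat hX hY hZ hPp hsum, output_dmat hX hY hZ hPp hsum]
        have hT : 2*((pI+pz)*(1/2:ℝ)+(px+py)*(1-1/2))-1 = 0 := by linarith
        have hm₁ : pmax^2 = (2*((pI+pz)*(1/2:ℝ)+(px+py)*(1-1/2))-1)^2
            + 4*(((pI+px-py-pz)*(0:ℝ))^2+((pI-px+py-pz)*(1/2))^2) := by
          rw [hT, hpmax, sq_abs]; ring
        have hm₂ : pmax^2 = (2*((pI+pz)*(1/2:ℝ)+(px+py)*(1-1/2))-1)^2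
            + 4*(((pI+px-py-pz)*(0:ℝ))^2+((pI-px+py-pz)*(-1/2))^2) := by
          rw [hT, hpmax, sq_abs]; ring
        have hk : (2*((pI+pz)*(1/2:ℝ)+(px+py)*(1-1/2))-1)
              * (2*((pI+pz)*(1/2:ℝ)+(px+py)*(1-1/2))-1)
            + 4*(((pI+px-py-pz)*(0:ℝ))*((pI+px-py-pz)*(0:ℝ))
              +((pI-px+py-pz)*(1/2))*((pI-px+py-pz)*(-1/2))) = -(pmax*pmax) := by
          rw [hT, hpmax, abs_mul_abs_self]; ring
        rw [trace_val hm₁ hm₂ hk]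
    · -- pmax = |lz|
      rw [hm2] at hpmax
      refine ⟨dmat 1 0 0, dmat 0 0 0,
        dmat_density (by norm_num), dmat_density (by norm_num), ?_⟩
      rw [renyiD, output_dmat hX hY hZ hPp hsum, output_dmat hX hY hZ hPp hsum]
      have hT1 : 2*((pI+pz)*(1:ℝ)+(px+py)*(1-1))-1 = pI - px - py + pz := by linarith
      have hT2 : 2*((pI+pz)*(0:ℝ)+(px+py)*(1-0))-1 = -(pI - px - py + pz) := by linarith
      have hm₁ : pmax^2 = (2*((pI+pz)*(1:ℝ)+(px+py)*(1-1))-1)^2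
          + 4*(((pI+px-py-pz)*(0:ℝ))^2+((pI-px+py-pz)*(0:ℝ))^2) := by
        rw [hT1, hpmax, sq_abs]; ring
      have hm₂ : pmax^2 = (2*((pI+pz)*(0:ℝ)+(px+py)*(1-0))-1)^2
          + 4*(((pI+px-py-pz)*(0:ℝ))^2+((pI-px+py-pz)*(0:ℝ))^2) := by
        rw [hT2, hpmax, sq_abs]; ring
      have hk : (2*((pI+pz)*(1:ℝ)+(px+py)*(1-1))-1)
            * (2*((pI+pz)*(0:ℝ)+(px+py)*(1-0))-1)
          + 4*(((pI+px-py-pz)*(0:ℝ))*((pI+px-py-pz)*(0:ℝ))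
            +((pI-px+py-pz)*(0:ℝ))*((pI-px+py-pz)*(0:ℝ))) = -(pmax*pmax) := by
        rw [hT1, hT2, hpmax, abs_mul_abs_self]; ring
      rw [trace_val hm₁ hm₂ hk]
  · -- upper bound
    rintro y ⟨ρ, σ, hρ, hσ, rfl⟩
    obtain ⟨t₁, a₁, b₁, hρf, hρc⟩ := density_repr hρ
    obtain ⟨t₂, a₂, b₂, hσf, hσc⟩ := density_repr hσ
    rw [renyiD, hρf, hσf, output_dmat hX hY hZ hPp hsum, output_dmat hX hY hZ hPp hsum]
    have hb₁ := out_bound hsum hxle hyle hzle hρc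
    have hb₂ := out_bound hsum hxle hyle hzle hσc
    have hTre := key_bound hp0 hpmax1 hα0 hα1 hb₁ hb₂
    have hlog := Real.log_le_log hQpos hTre
    have hneg : 1/(α-1) ≤ 0 := by
      apply div_nonpos_of_nonneg_of_nonpos <;> linarith
    exact mul_le_mul_of_nonpos_left hlog hneg
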